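/- Let A be a 2×2 matrix with A² + 3A + 3I = 0 and v with {v, Av} linearly independent. Then I = −2A^{−1} − A^{−2} + A^{−3} − A^{−4} + A^{−5} − ⋯ (i.e. I = −2A^{−1} − A^{−2} + ∑_{i≥3}(−1)^{i+1}A^{−i}), and consequently for 𝒟 = {0, v, −Av} both v and Av + v lie in T(A,𝒟) − T(A,𝒟), so T(A,𝒟) is connected. -/

import Mathlib

open Matrix
open scoped Pointwise

abbrev TDvec := Fin 2 → ℝ
abbrev TDmat := Matrix (Fin 2) (Fin 2) ℝ

/-! ### Generic summability helper -/

lemma TD.sixstep {E : Type*} [NormedAddCommGroup E] (w : ℕ → E) (N : ℕ)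
    (hw : ∀ i, N ≤ i → ‖w (i+6)‖ ≤ ‖w i‖ / 2) :
    Summable fun i => ‖w i‖ := by
  set M : ℝ := ∑ j ∈ Finset.range (N+6), ‖w j‖ * (10/9)^j with hM
  have hM0 : 0 ≤ M := Finset.sum_nonneg (fun j _ => by positivity)
  have key : ∀ i, ‖w i‖ ≤ M * (9/10)^i := by
    intro i
    induction i using Nat.strong_induction_on with
    | _ i ih =>
      by_cases hi : i < N + 6
      · have h1 : ‖w i‖ * (10/9)^i ≤ M :=
          Finset.single_le_sum (f := fun j => ‖w j‖*(10/9)^j)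
            (fun j _ => by positivity) (Finset.mem_range.mpr hi)
        have h2 : ((10:ℝ)/9)^i * (9/10)^i = 1 := by rw [← mul_pow]; norm_num
        calc ‖w i‖ = ‖w i‖ * (((10:ℝ)/9)^i * (9/10)^i) := by rw [h2, mul_one]
        _ = (‖w i‖ * (10/9)^i) * (9/10)^i := by ring
        _ ≤ M * (9/10)^i := by
            exact mul_le_mul_of_nonneg_right h1 (by positivity)
      · push_neg at hi
        have hj : i = (i-6) + 6 := by omega
        have h2 := hw (i-6) (by omega)
        have h3 := ih (i-6) (by omega)
        have h4 : (0:ℝ) ≤ (9/10)^(i-6) := by positivity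
        rw [hj]
        calc ‖w ((i-6)+6)‖ ≤ ‖w (i-6)‖/2 := h2
        _ ≤ (M * (9/10)^(i-6))/2 := by linarith
        _ ≤ M * (9/10)^((i-6)+6) := by
            rw [pow_add]
            nlinarith [mul_nonneg hM0 h4]
  exact Summable.of_nonneg_of_le (fun i => norm_nonneg _) key
    ((summable_geometric_of_lt_one (by norm_num) (by norm_num)).mul_left M)

/-! ### Matrix algebra consequences of `A² + 3A + 3 = 0` -/

section alg
variable {A : TDmat}

lemma TD.hAsq (h : A * A + (3 : ℝ) • A + (3 : ℝ) • (1 : TDmat) = 0) :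
    A * A = -((3:ℝ) • A) - (3:ℝ) • (1 : TDmat) := by
  rw [add_assoc] at h
  rw [eq_neg_of_add_eq_zero_left h]; abel

lemma TD.hright (h : A * A + (3 : ℝ) • A + (3 : ℝ) • (1 : TDmat) = 0) :
    A * ((-(1/3) : ℝ) • A - 1) = 1 := by
  rw [mul_sub, mul_smul_comm, TD.hAsq h, mul_one]; module

lemma TD.hBdef (h : A * A + (3 : ℝ) • A + (3 : ℝ) • (1 : TDmat) = 0) :
    A⁻¹ = (-(1/3) : ℝ) • A - 1 := inv_eq_right_inv (TD.hright h)

lemma TD.hBA (h : A * A + (3 : ℝ) • A + (3 : ℝ) • (1 : TDmat) = 0) : A⁻¹ * A = 1 := by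
  rw [TD.hBdef h, sub_mul, smul_mul_assoc, one_mul, TD.hAsq h]; module

lemma TD.hB2 (h : A * A + (3 : ℝ) • A + (3 : ℝ) • (1 : TDmat) = 0) :
    A⁻¹ * A⁻¹ = -A⁻¹ - (1/3 : ℝ) • (1 : TDmat) := by
  conv_lhs => rw [TD.hBdef h]
  rw [sub_mul, smul_mul_assoc, mul_sub, mul_smul_comm, TD.hAsq h, one_mul, mul_one, TD.hBdef h]
  module

lemma TD.hpow2 (h : A * A + (3 : ℝ) • A + (3 : ℝ) • (1 : TDmat) = 0) :
    A⁻¹^2 = (-1:ℝ) • A⁻¹ + (-1/3:ℝ) • (1:TDmat) := by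
  rw [sq, TD.hB2 h]; module

lemma TD.hstep (h : A * A + (3 : ℝ) • A + (3 : ℝ) • (1 : TDmat) = 0)
    {k : ℕ} {a b : ℝ} (hk : A⁻¹^k = a • A⁻¹ + b • (1:TDmat)) :
    A⁻¹^(k+1) = (b-a) • A⁻¹ + (-a/3) • (1:TDmat) := by
  rw [pow_succ, hk, add_mul, smul_mul_assoc, smul_mul_assoc, one_mul, TD.hB2 h]
  module

lemma TD.hpow3 (h : A * A + (3 : ℝ) • A + (3 : ℝ) • (1 : TDmat) = 0) :
    A⁻¹^3 = (2/3:ℝ) • A⁻¹ + (1/3:ℝ) • (1:TDmat) := by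
  rw [show (3:ℕ) = 2+1 from by norm_num, TD.hstep h (TD.hpow2 h)]; norm_num
lemma TD.hpow4 (h : A * A + (3 : ℝ) • A + (3 : ℝ) • (1 : TDmat) = 0) :
    A⁻¹^4 = (-1/3:ℝ) • A⁻¹ + (-2/9:ℝ) • (1:TDmat) := by
  rw [show (4:ℕ) = 3+1 from by norm_num, TD.hstep h (TD.hpow3 h)]; norm_num
lemma TD.hpow5 (h : A * A + (3 : ℝ) • A + (3 : ℝ) • (1 : TDmat) = 0) :
    A⁻¹^5 = (1/9:ℝ) • A⁻¹ + (1/9:ℝ) • (1:TDmat) := by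
  rw [show (5:ℕ) = 4+1 from by norm_num, TD.hstep h (TD.hpow4 h)]; norm_num
lemma TD.hpow6 (h : A * A + (3 : ℝ) • A + (3 : ℝ) • (1 : TDmat) = 0) :
    A⁻¹^6 = (0:ℝ) • A⁻¹ + (-1/27:ℝ) • (1:TDmat) := by
  rw [show (6:ℕ) = 5+1 from by norm_num, TD.hstep h (TD.hpow5 h)]; norm_num
lemma TD.hpow7 (h : A * A + (3 : ℝ) • A + (3 : ℝ) • (1 : TDmat) = 0) :
    A⁻¹^7 = (-1/27:ℝ) • A⁻¹ + (0:ℝ) • (1:TDmat) := by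
  rw [show (7:ℕ) = 6+1 from by norm_num, TD.hstep h (TD.hpow6 h)]; norm_num
lemma TD.hpow8 (h : A * A + (3 : ℝ) • A + (3 : ℝ) • (1 : TDmat) = 0) :
    A⁻¹^8 = (1/27:ℝ) • A⁻¹ + (1/81:ℝ) • (1:TDmat) := by
  rw [show (8:ℕ) = 7+1 from by norm_num, TD.hstep h (TD.hpow7 h)]; norm_num

lemma TD.hB6 (h : A * A + (3 : ℝ) • A + (3 : ℝ) • (1 : TDmat) = 0) :
    A⁻¹^6 = (-1/27:ℝ) • (1:TDmat) := by rw [TD.hpow6 h]; module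

end alg

/-! ### The matrix series -/

section series
variable {A : TDmat}

attribute [local instance] Matrix.normedAddCommGroup Matrix.normedSpace

lemma TD.conj1 (h : A * A + (3 : ℝ) • A + (3 : ℝ) • (1 : TDmat) = 0) :
    HasSum (fun i : ℕ =>
        (if i + 1 = 1 then (-2 : ℝ) else if i + 1 = 2 then (-1 : ℝ)
          else (-1 : ℝ) ^ (i + 2)) • A⁻¹ ^ (i + 1))
      (1 : TDmat) := by
  set f : ℕ → TDmat := fun i =>
    (if i + 1 = 1 then (-2 : ℝ) else if i + 1 = 2 then (-1 : ℝ)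
          else (-1 : ℝ) ^ (i + 2)) • A⁻¹ ^ (i + 1) with hf
  have hrec : ∀ i, 2 ≤ i → f (i+6) = (-1/27 : ℝ) • f i := by
    intro i hi
    have hc1 : (if i+6+1 = 1 then (-2:ℝ) else if i+6+1 = 2 then (-1:ℝ) else (-1:ℝ)^(i+6+2))
        = (-1:ℝ)^(i+2) := by
      rw [if_neg (by omega), if_neg (by omega), show i+6+2 = (i+2)+6 from by omega,
        pow_add]
      norm_num
    have hc2 : (if i+1 = 1 then (-2:ℝ) else if i+1 = 2 then (-1:ℝ) else (-1:ℝ)^(i+2))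
        = (-1:ℝ)^(i+2) := by
      rw [if_neg (by omega), if_neg (by omega)]
    have hp : A⁻¹^(i+6+1) = (-1/27:ℝ) • A⁻¹^(i+1) := by
      rw [show i+6+1 = (i+1)+6 from by omega, pow_add, TD.hB6 h, mul_smul_comm, mul_one]
    show _ • A⁻¹ ^ (i+6+1) = (-1/27:ℝ) • (_ • A⁻¹ ^ (i+1))
    rw [hc1, hc2, hp, smul_comm]
  have hns : Summable fun i => ‖f i‖ := by
    apply TD.sixstep f 2
    intro i hi
    rw [hrec i hi, norm_smul]
    have h0 : ‖(-1/27 : ℝ)‖ = 1/27 := by norm_num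
    rw [h0]
    have := norm_nonneg (f i)
    linarith
  have hS : Summable f := hns.of_norm
  set S : TDmat := ∑' i, f i with hSdef
  have e8 : ∑ i ∈ Finset.range 8, f i + ∑' i, f (i+8) = S := Summable.sum_add_tsum_nat_add 8 hS
  have e2 : ∑ i ∈ Finset.range 2, f i + ∑' i, f (i+2) = S := Summable.sum_add_tsum_nat_add 2 hS
  have hsh : ∀ i : ℕ, f (i+8) = (-1/27:ℝ) • f (i+2) := by
    intro i
    rw [show i+8 = (i+2)+6 from by omega]
    exact hrec (i+2) (by omega)
  have e3 : ∑' i, f (i+8) = (-1/27:ℝ) • ∑' i, f (i+2) := by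
    rw [tsum_congr hsh, Summable.tsum_const_smul _ ((summable_nat_add_iff 2).2 hS)]
  have key : (28/27 : ℝ) • S = (28/27 : ℝ) • (1 : TDmat) := by
    have e4 : ∑' i, f (i+2) = S - ∑ i ∈ Finset.range 2, f i := by
      rw [← e2]; abel
    have e5 : S = ∑ i ∈ Finset.range 8, f i + (-1/27:ℝ) • (S - ∑ i ∈ Finset.range 2, f i) := by
      rw [← e4, ← e3, e8]
    have hfin : ∑ i ∈ Finset.range 8, f i + (1/27:ℝ) • (∑ i ∈ Finset.range 2, f i)
        = (28/27 : ℝ) • (1 : TDmat) := by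
      simp only [hf, Finset.sum_range_succ, Finset.sum_range_zero, Nat.reduceAdd, reduceIte,
        pow_one, zero_add]
      rw [show ((-1:ℝ))^4 = 1 from by norm_num, show ((-1:ℝ))^5 = -1 from by norm_num,
        show ((-1:ℝ))^6 = 1 from by norm_num, show ((-1:ℝ))^7 = -1 from by norm_num,
        show ((-1:ℝ))^8 = 1 from by norm_num, show ((-1:ℝ))^9 = -1 from by norm_num,
        TD.hpow2 h, TD.hpow3 h, TD.hpow4 h, TD.hpow5 h, TD.hpow6 h, TD.hpow7 h, TD.hpow8 h]
      match_scalars <;> norm_num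
    rw [← hfin]
    linear_combination (norm := module) e5
  have : S = 1 := smul_right_injective TDmat (by norm_num : (28/27:ℝ) ≠ 0) key
  exact this ▸ hS.hasSum

end series

/-! ### Vector estimates and summability of digit series -/

section vecstuff
variable {A : TDmat} {v : TDvec}

noncomputable def TDclm (M : TDmat) : TDvec →L[ℝ] TDvec :=
  LinearMap.toContinuousLinearMap (Matrix.mulVecLin M)

lemma TD.hBv (h : A * A + (3 : ℝ) • A + (3 : ℝ) • (1 : TDmat) = 0) :
    A⁻¹ *ᵥ v = (-(1/3) : ℝ) • (A *ᵥ v) - v := by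
  rw [TD.hBdef h, sub_mulVec, smul_mulVec, one_mulVec]

lemma TD.hBAv (h : A * A + (3 : ℝ) • A + (3 : ℝ) • (1 : TDmat) = 0) :
    A⁻¹ *ᵥ (A *ᵥ v) = v := by
  rw [mulVec_mulVec, TD.hBA h, one_mulVec]

lemma TD.hB2v (h : A * A + (3 : ℝ) • A + (3 : ℝ) • (1 : TDmat) = 0) (x : TDvec) :
    A⁻¹^2 *ᵥ x = -(A⁻¹ *ᵥ x) - (1/3 : ℝ) • x := by
  rw [TD.hpow2 h, add_mulVec, smul_mulVec, smul_mulVec, one_mulVec]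
  module

lemma TD.hshift6 (h : A * A + (3 : ℝ) • A + (3 : ℝ) • (1 : TDmat) = 0) (i : ℕ) (x : TDvec) :
    A⁻¹^(i+6+1) *ᵥ x = (-1/27 : ℝ) • (A⁻¹^(i+1) *ᵥ x) := by
  rw [show i+6+1 = (i+1)+6 from by omega, pow_add, TD.hB6 h, mul_smul_comm, mul_one,
    smul_mulVec]

/-- the dominating sequence -/
noncomputable def TDu (A : TDmat) (v : TDvec) : ℕ → ℝ :=
  fun i => max ‖A⁻¹^(i+1) *ᵥ v‖ ‖A⁻¹^(i+1) *ᵥ (A *ᵥ v)‖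

lemma TD.u_nonneg (i : ℕ) : 0 ≤ TDu A v i :=
  le_trans (norm_nonneg _) (le_max_left _ _)

lemma TD.u_rec (h : A * A + (3 : ℝ) • A + (3 : ℝ) • (1 : TDmat) = 0) (i : ℕ) :
    TDu A v (i+6) = TDu A v i / 27 := by
  unfold TDu
  rw [TD.hshift6 h, TD.hshift6 h, norm_smul, norm_smul]
  rw [show ‖(-1/27 : ℝ)‖ = 1/27 from by norm_num]
  rw [← mul_max_of_nonneg _ _ (by norm_num : (0:ℝ) ≤ 1/27)]
  ring

lemma TD.u_summable (h : A * A + (3 : ℝ) • A + (3 : ℝ) • (1 : TDmat) = 0) :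
    Summable (TDu A v) := by
  have h1 : Summable fun i => ‖TDu A v i‖ := by
    apply TD.sixstep (TDu A v) 0
    intro i _
    rw [TD.u_rec h, Real.norm_of_nonneg (div_nonneg (TD.u_nonneg i) (by norm_num)),
      Real.norm_of_nonneg (TD.u_nonneg i)]
    have := TD.u_nonneg (A := A) (v := v) i
    linarith
  exact (summable_congr (fun i => (Real.norm_of_nonneg (TD.u_nonneg i)))).mp h1

lemma TD.dig_bound (d : ℕ → TDvec)
    (hd : ∀ n, d n = 0 ∨ d n = v ∨ d n = -v ∨ d n = A *ᵥ v ∨ d n = -(A *ᵥ v)) (n : ℕ) :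
    ‖A⁻¹^(n+1) *ᵥ d n‖ ≤ TDu A v n := by
  rcases hd n with h | h | h | h | h <;> rw [h]
  · rw [mulVec_zero, norm_zero]; exact TD.u_nonneg n
  · exact le_max_left _ _
  · rw [mulVec_neg, norm_neg]; exact le_max_left _ _
  · exact le_max_right _ _
  · rw [mulVec_neg, norm_neg]; exact le_max_right _ _

lemma TD.dig_summable (h : A * A + (3 : ℝ) • A + (3 : ℝ) • (1 : TDmat) = 0) (d : ℕ → TDvec)
    (hd : ∀ n, d n = 0 ∨ d n = v ∨ d n = -v ∨ d n = A *ᵥ v ∨ d n = -(A *ᵥ v)) :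
    Summable (fun n => A⁻¹^(n+1) *ᵥ d n) := by
  apply Summable.of_norm
  exact Summable.of_nonneg_of_le (fun n => norm_nonneg _) (TD.dig_bound d hd) (TD.u_summable h)

/-- uniqueness: if z = B^2 z then z = 0 -/
lemma TD.fix_zero (h : A * A + (3 : ℝ) • A + (3 : ℝ) • (1 : TDmat) = 0)
    {z : TDvec} (hz : z = A⁻¹^2 *ᵥ z) : z = 0 := by
  have h4 : z = (A⁻¹^2 * A⁻¹^2) *ᵥ z := by rw [← mulVec_mulVec, ← hz]; exact hz
  have h6a : z = (A⁻¹^2 * A⁻¹^2 * A⁻¹^2) *ᵥ z := by rw [← mulVec_mulVec, ← hz]; exact h4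
  rw [← pow_add, ← pow_add] at h6a
  simp only [Nat.reduceAdd] at h6a
  have h6 : z = A⁻¹^6 *ᵥ z := h6a
  rw [TD.hB6 h, smul_mulVec, one_mulVec] at h6
  have h7 : (28/27 : ℝ) • z = 0 := by
    rw [show (28/27 : ℝ) = 1 - (-1/27) from by norm_num, sub_smul, one_smul]
    rw [← h6] at *
    abel
  rcases smul_eq_zero.mp h7 with h8 | h8
  · norm_num at h8
  · exact h8

/-- sum of a 2-periodic difference sequence equals the candidate -/
lemma TD.periodic_sum_eq (h : A * A + (3 : ℝ) • A + (3 : ℝ) • (1 : TDmat) = 0)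
    {δ : ℕ → TDvec} {S c : TDvec}
    (hS : HasSum (fun n => A⁻¹^(n+1) *ᵥ δ n) S)
    (hper : ∀ n, δ (n+2) = δ n)
    (hc : c = A⁻¹^(0+1) *ᵥ δ 0 + A⁻¹^(1+1) *ᵥ δ 1 + A⁻¹^2 *ᵥ c) : S = c := by
  set g : ℕ → TDvec := fun n => A⁻¹^(n+1) *ᵥ δ n with hg
  have hsum := hS.summable
  have e2 : ∑ i ∈ Finset.range 2, g i + ∑' i, g (i+2) = S := by
    rw [Summable.sum_add_tsum_nat_add 2 hsum, hS.tsum_eq]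
  have hsh : ∀ i, g (i+2) = A⁻¹^2 *ᵥ g i := by
    intro i
    show A⁻¹^(i+2+1) *ᵥ δ (i+2) = _
    rw [hper i, show i+2+1 = 2+(i+1) from by omega, pow_add, ← mulVec_mulVec]
  have e3 : ∑' i, g (i+2) = A⁻¹^2 *ᵥ S := by
    rw [tsum_congr hsh]
    exact (hS.mapL (TDclm (A⁻¹^2))).tsum_eq
  have e4 : g 0 + g 1 + A⁻¹^2 *ᵥ S = S := by
    rw [← e3, ← e2, Finset.sum_range_succ, Finset.sum_range_one]
  have hz : S - c = A⁻¹^2 *ᵥ (S - c) := by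
    rw [mulVec_sub]
    calc S - c = (g 0 + g 1 + A⁻¹^2 *ᵥ S) - (g 0 + g 1 + A⁻¹^2 *ᵥ c) := by
          rw [e4, ← hc]
    _ = A⁻¹^2 *ᵥ S - A⁻¹^2 *ᵥ c := by abel
  have h0 : S - c = 0 := TD.fix_zero h hz
  linear_combination (norm := module) h0

end vecstuff

/-- The self-affine set `T(A, D) = {∑_{i≥1} A^{-i} d_i : d_i ∈ D}`. -/
noncomputable def selfAffine (A : Matrix (Fin 2) (Fin 2) ℝ) (D : Set (Fin 2 → ℝ)) :
    Set (Fin 2 → ℝ) :=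
  { x | ∃ d : ℕ → (Fin 2 → ℝ), (∀ n, d n ∈ D) ∧
      HasSum (fun n => (A⁻¹ ^ (n + 1)) *ᵥ d n) x }

/-! ### Membership of `v` and `A v + v` in `T - T` -/

section memb
variable {A : TDmat} {v : TDvec}

noncomputable def TDdv (A : TDmat) (v : TDvec) : ℕ → TDvec :=
  fun n => if Even n then v else -(A *ᵥ v)
noncomputable def TDev (A : TDmat) (v : TDvec) : ℕ → TDvec :=
  fun n => if Even n then -(A *ᵥ v) else v

lemma TD.mem_sub_v (h : A * A + (3 : ℝ) • A + (3 : ℝ) • (1 : TDmat) = 0) :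
    ∃ x ∈ selfAffine A {0, v, -(A *ᵥ v)}, ∃ y ∈ selfAffine A {0, v, -(A *ᵥ v)}, x - y = v := by
  have hdmem : ∀ n, TDdv A v n ∈ ({0, v, -(A *ᵥ v)} : Set TDvec) := by
    intro n; unfold TDdv; split <;> simp
  have hemem : ∀ n, TDev A v n ∈ ({0, v, -(A *ᵥ v)} : Set TDvec) := by
    intro n; unfold TDev; split <;> simp
  have hdsum : Summable (fun n => A⁻¹^(n+1) *ᵥ TDdv A v n) := by
    apply TD.dig_summable h
    intro n; unfold TDdv; split
    · right; left; rfl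
    · right; right; right; right; rfl
  have hesum : Summable (fun n => A⁻¹^(n+1) *ᵥ TDev A v n) := by
    apply TD.dig_summable h
    intro n; unfold TDev; split
    · right; right; right; right; rfl
    · right; left; rfl
  set x := ∑' n, A⁻¹^(n+1) *ᵥ TDdv A v n with hx
  set y := ∑' n, A⁻¹^(n+1) *ᵥ TDev A v n with hy
  refine ⟨x, ⟨TDdv A v, hdmem, hdsum.hasSum⟩, y, ⟨TDev A v, hemem, hesum.hasSum⟩, ?_⟩
  set δ : ℕ → TDvec := fun n => if Even n then v + A *ᵥ v else -(v + A *ᵥ v) with hδ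
  have hdiff : ∀ n, A⁻¹^(n+1) *ᵥ TDdv A v n - A⁻¹^(n+1) *ᵥ TDev A v n = A⁻¹^(n+1) *ᵥ δ n := by
    intro n
    rw [← mulVec_sub]
    congr 1
    unfold TDdv TDev
    simp only [hδ]
    split
    · abel
    · abel
  have hS : HasSum (fun n => A⁻¹^(n+1) *ᵥ δ n) (x - y) := by
    have h2 := hdsum.hasSum.sub hesum.hasSum
    exact (funext hdiff : _) ▸ h2
  have hper : ∀ n, δ (n+2) = δ n := by
    intro n
    have hpar : Even (n+2) = Even n := by
      rw [eq_iff_iff, Nat.even_add]; simp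
    simp only [hδ, hpar]
  have hc : v = A⁻¹^(0+1) *ᵥ δ 0 + A⁻¹^(1+1) *ᵥ δ 1 + A⁻¹^2 *ᵥ v := by
    have h0 : δ 0 = v + A *ᵥ v := by simp [hδ]
    have h1 : δ 1 = -(v + A *ᵥ v) := by simp [hδ]
    rw [h0, h1]
    simp only [zero_add, Nat.reduceAdd, pow_one]
    rw [TD.hB2v h (-(v + A *ᵥ v)), TD.hB2v h v]
    simp only [mulVec_add, mulVec_neg]
    rw [TD.hBv h, TD.hBAv h]
    module
  exact TD.periodic_sum_eq h hS hper hc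

noncomputable def TDdav (A : TDmat) (v : TDvec) : ℕ → TDvec :=
  fun n => if n = 0 then -(A *ᵥ v) else if Even n then 0 else v
noncomputable def TDeav (A : TDmat) (v : TDvec) : ℕ → TDvec :=
  fun n => if n = 0 then v else if Even n then v else 0
noncomputable def TDw (v : TDvec) : ℕ → TDvec := fun n => if Even n then v else -v

lemma TD.mem_sub_av (h : A * A + (3 : ℝ) • A + (3 : ℝ) • (1 : TDmat) = 0) :
    ∃ x ∈ selfAffine A {0, v, -(A *ᵥ v)}, ∃ y ∈ selfAffine A {0, v, -(A *ᵥ v)},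
      x - y = A *ᵥ v + v := by
  have hdmem : ∀ n, TDdav A v n ∈ ({0, v, -(A *ᵥ v)} : Set TDvec) := by
    intro n; unfold TDdav; split
    · simp
    · split <;> simp
  have hemem : ∀ n, TDeav A v n ∈ ({0, v, -(A *ᵥ v)} : Set TDvec) := by
    intro n; unfold TDeav; split
    · simp
    · split <;> simp
  have hdsum : Summable (fun n => A⁻¹^(n+1) *ᵥ TDdav A v n) := by
    apply TD.dig_summable h
    intro n; unfold TDdav; split
    · right; right; right; right; rfl
    · split
      · left; rfl
      · right; left; rfl
  have hesum : Summable (fun n => A⁻¹^(n+1) *ᵥ TDeav A v n) := by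
    apply TD.dig_summable h
    intro n; unfold TDeav; split
    · right; left; rfl
    · split
      · right; left; rfl
      · left; rfl
  have hwsum : Summable (fun n => A⁻¹^(n+1) *ᵥ TDw v n) := by
    apply TD.dig_summable h
    intro n; unfold TDw; split
    · right; left; rfl
    · right; right; left; rfl
  set x := ∑' n, A⁻¹^(n+1) *ᵥ TDdav A v n with hx
  set y := ∑' n, A⁻¹^(n+1) *ᵥ TDeav A v n with hy
  refine ⟨x, ⟨TDdav A v, hdmem, hdsum.hasSum⟩, y, ⟨TDeav A v, hemem, hesum.hasSum⟩, ?_⟩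
  set W := ∑' n, A⁻¹^(n+1) *ᵥ TDw v n with hW
  have hWc : W = (-2 : ℝ) • v - A *ᵥ v := by
    apply TD.periodic_sum_eq h hwsum.hasSum
    · intro n
      have hpar : Even (n+2) = Even n := by rw [eq_iff_iff, Nat.even_add]; simp
      simp only [TDw, hpar]
    · have h0 : TDw v 0 = v := by simp [TDw]
      have h1 : TDw v 1 = -v := by simp [TDw]
      rw [h0, h1]
      simp only [zero_add, Nat.reduceAdd, pow_one]
      rw [TD.hB2v h (-v), TD.hB2v h ((-2 : ℝ) • v - A *ᵥ v)]
      simp only [mulVec_neg, mulVec_sub, mulVec_smul]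
      rw [TD.hBv h, TD.hBAv h]
      module
  set δ : ℕ → TDvec := fun n => if n = 0 then -(v + A *ᵥ v) else TDw v (n-1) with hδ
  have hdiff : ∀ n, A⁻¹^(n+1) *ᵥ TDdav A v n - A⁻¹^(n+1) *ᵥ TDeav A v n = A⁻¹^(n+1) *ᵥ δ n := by
    intro n
    rw [← mulVec_sub]
    congr 1
    simp only [TDdav, TDeav, hδ, TDw]
    rcases n with _ | m
    · simp; try abel
      all_goals trivial
    · have h2 : ¬ (m + 1 = 0) := by omega
      have h3 : Even (m+1) = ¬ (Even m) := by
        rw [eq_iff_iff, Nat.even_add_one]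
      simp only [h2, if_false, h3, Nat.add_sub_cancel]
      by_cases hm : Even m
      · simp [hm]
      · simp [hm]
  have hS : HasSum (fun n => A⁻¹^(n+1) *ᵥ δ n) (x - y) := by
    have h2 := hdsum.hasSum.sub hesum.hasSum
    exact (funext hdiff : _) ▸ h2
  have hsum_δ : Summable (fun n => A⁻¹^(n+1) *ᵥ δ n) := hS.summable
  have e1 : ∑ i ∈ Finset.range 1, A⁻¹^(i+1) *ᵥ δ i + ∑' i, A⁻¹^(i+1+1) *ᵥ δ (i+1) = x - y := by
    rw [Summable.sum_add_tsum_nat_add 1 hsum_δ, hS.tsum_eq]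
  have hsh : ∀ i : ℕ, A⁻¹^(i+1+1) *ᵥ δ (i+1) = A⁻¹ *ᵥ (A⁻¹^(i+1) *ᵥ TDw v i) := by
    intro i
    have h2 : δ (i+1) = TDw v i := by
      simp only [hδ]
      rw [if_neg (by omega), Nat.add_sub_cancel]
    rw [h2, mulVec_mulVec, ← pow_succ']
  have e2 : ∑' i, A⁻¹^(i+1+1) *ᵥ δ (i+1) = A⁻¹ *ᵥ W := by
    rw [tsum_congr hsh]
    exact (hwsum.hasSum.mapL (TDclm A⁻¹)).tsum_eq
  have e0 : ∑ i ∈ Finset.range 1, A⁻¹^(i+1) *ᵥ δ i = A⁻¹ *ᵥ (-(v + A *ᵥ v)) := by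
    rw [Finset.sum_range_one]
    simp only [hδ, if_pos rfl, zero_add, pow_one]
  rw [e0, e2, hWc] at e1
  rw [← e1]
  simp only [mulVec_neg, mulVec_add, mulVec_sub, mulVec_smul]
  rw [TD.hBv h, TD.hBAv h]
  module

end memb

/-! ### Structure of the attractor -/

section Tstruct
variable {A : TDmat} {v : TDvec}

lemma TD.dmem_cases {d : ℕ → TDvec} (hd : ∀ n, d n ∈ ({0, v, -(A *ᵥ v)} : Set TDvec)) :
    ∀ n, d n = 0 ∨ d n = v ∨ d n = -v ∨ d n = A *ᵥ v ∨ d n = -(A *ᵥ v) := by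
  intro n
  rcases hd n with h | h | h
  · exact Or.inl h
  · exact Or.inr (Or.inl h)
  · exact Or.inr (Or.inr (Or.inr (Or.inr h)))

lemma TD.zero_mem_T : (0 : TDvec) ∈ selfAffine A ({0, v, -(A *ᵥ v)} : Set TDvec) := by
  refine ⟨fun _ => 0, fun n => Or.inl rfl, ?_⟩
  have h1 : (fun n : ℕ => A⁻¹^(n+1) *ᵥ (0 : TDvec)) = fun _ => (0 : TDvec) := by
    funext n; rw [mulVec_zero]
  rw [h1]
  exact hasSum_zero

lemma TD.piece_mem_T {c x : TDvec} (hc : c ∈ ({0, v, -(A *ᵥ v)} : Set TDvec))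
    (hx : x ∈ selfAffine A ({0, v, -(A *ᵥ v)} : Set TDvec)) :
    A⁻¹ *ᵥ (c + x) ∈ selfAffine A ({0, v, -(A *ᵥ v)} : Set TDvec) := by
  obtain ⟨d, hd, hsum⟩ := hx
  set d' : ℕ → TDvec := fun n => Nat.rec c (fun m _ => d m) n with hd'
  have hd'0 : d' 0 = c := rfl
  have hd's : ∀ n, d' (n+1) = d n := fun n => rfl
  refine ⟨d', ?_, ?_⟩
  · intro n
    cases n with
    | zero => exact hc
    | succ m => exact hd m
  · have h1 : HasSum (fun n => A⁻¹^(n+1+1) *ᵥ d' (n+1)) (A⁻¹ *ᵥ x) := by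
      have h2 := hsum.mapL (TDclm A⁻¹)
      have h3 : (fun n => TDclm A⁻¹ (A⁻¹^(n+1) *ᵥ d n)) = fun n => A⁻¹^(n+1+1) *ᵥ d' (n+1) := by
        funext n
        show A⁻¹ *ᵥ (A⁻¹^(n+1) *ᵥ d n) = _
        rw [hd's, mulVec_mulVec, ← pow_succ']
      rw [h3] at h2
      exact h2
    refine (hasSum_nat_add_iff' 1).mp ?_
    have hval : A⁻¹ *ᵥ (c + x) - ∑ i ∈ Finset.range 1, A⁻¹^(i+1) *ᵥ d' i = A⁻¹ *ᵥ x := by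
      rw [Finset.sum_range_one, mulVec_add]
      simp only [zero_add, pow_one, hd'0]
      abel
    rw [hval]
    exact h1

lemma TD.decomp_T (h : A * A + (3 : ℝ) • A + (3 : ℝ) • (1 : TDmat) = 0)
    {x : TDvec} (hx : x ∈ selfAffine A ({0, v, -(A *ᵥ v)} : Set TDvec)) :
    ∃ c ∈ ({0, v, -(A *ᵥ v)} : Set TDvec), ∃ y ∈ selfAffine A ({0, v, -(A *ᵥ v)} : Set TDvec),
      x = A⁻¹ *ᵥ (c + y) := by
  obtain ⟨d, hd, hsum⟩ := hx
  have hsh : Summable (fun n => A⁻¹^(n+1) *ᵥ d (n+1)) :=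
    TD.dig_summable h _ (fun n => TD.dmem_cases hd (n+1))
  set y := ∑' n, A⁻¹^(n+1) *ᵥ d (n+1) with hy
  refine ⟨d 0, hd 0, y, ⟨fun n => d (n+1), fun n => hd (n+1), hsh.hasSum⟩, ?_⟩
  have e1 : ∑ i ∈ Finset.range 1, A⁻¹^(i+1) *ᵥ d i + ∑' n, A⁻¹^(n+1+1) *ᵥ d (n+1) = x := by
    rw [Summable.sum_add_tsum_nat_add 1 hsum.summable, hsum.tsum_eq]
  have e2 : ∑' n, A⁻¹^(n+1+1) *ᵥ d (n+1) = A⁻¹ *ᵥ y := by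
    have h3 : (fun n => A⁻¹^(n+1+1) *ᵥ d (n+1)) = fun n => TDclm A⁻¹ (A⁻¹^(n+1) *ᵥ d (n+1)) := by
      funext n
      show _ = A⁻¹ *ᵥ (A⁻¹^(n+1) *ᵥ d (n+1))
      rw [mulVec_mulVec, ← pow_succ']
    rw [h3]
    exact (hsh.hasSum.mapL (TDclm A⁻¹)).tsum_eq
  rw [e2, Finset.sum_range_one] at e1
  simp only [zero_add, pow_one] at e1
  rw [mulVec_add, e1]

lemma TD.bound_T (h : A * A + (3 : ℝ) • A + (3 : ℝ) • (1 : TDmat) = 0)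
    {x : TDvec} (hx : x ∈ selfAffine A ({0, v, -(A *ᵥ v)} : Set TDvec)) :
    ‖x‖ ≤ ∑' i, TDu A v i := by
  obtain ⟨d, hd, hsum⟩ := hx
  have h0 := TD.dig_bound d (TD.dmem_cases hd)
  have h1 : Summable fun n => ‖A⁻¹^(n+1) *ᵥ d n‖ :=
    Summable.of_nonneg_of_le (fun n => norm_nonneg _) h0 (TD.u_summable h)
  calc ‖x‖ = ‖∑' n, A⁻¹^(n+1) *ᵥ d n‖ := by rw [hsum.tsum_eq]
  _ ≤ ∑' n, ‖A⁻¹^(n+1) *ᵥ d n‖ := norm_tsum_le_tsum_norm h1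
  _ ≤ _ := Summable.tsum_le_tsum h0 h1 (TD.u_summable h)

lemma TD.compact_T (h : A * A + (3 : ℝ) • A + (3 : ℝ) • (1 : TDmat) = 0) :
    IsCompact (selfAffine A ({0, v, -(A *ᵥ v)} : Set TDvec)) := by
  classical
  set ψ : Fin 3 → TDvec := ![0, v, -(A *ᵥ v)] with hψ
  have hψmem : ∀ j, ψ j ∈ ({0, v, -(A *ᵥ v)} : Set TDvec) := by
    intro j
    fin_cases j
    · exact Or.inl rfl
    · exact Or.inr (Or.inl rfl)
    · exact Or.inr (Or.inr rfl)
  set Φ : (ℕ → Fin 3) → TDvec := fun σ => ∑' n, A⁻¹^(n+1) *ᵥ ψ (σ n) with hΦ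
  have hcont : Continuous Φ := by
    refine continuous_tsum ?_ (TD.u_summable h (A := A) (v := v)) ?_
    · intro n
      exact (TDclm (A⁻¹^(n+1))).continuous.comp
        ((continuous_of_discreteTopology (α := Fin 3)).comp (continuous_apply n))
    · intro n σ
      exact TD.dig_bound (fun k => ψ (σ k)) (fun k => TD.dmem_cases (fun m => hψmem (σ m)) k) n
  have hrange : Set.range Φ = selfAffine A ({0, v, -(A *ᵥ v)} : Set TDvec) := by
    apply Set.eq_of_subset_of_subset
    · rintro _ ⟨σ, rfl⟩
      exact ⟨fun n => ψ (σ n), fun n => hψmem (σ n),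
        (TD.dig_summable h _ (fun k => TD.dmem_cases (fun m => hψmem (σ m)) k)).hasSum⟩
    · rintro x ⟨d, hd, hsum⟩
      set σ : ℕ → Fin 3 := fun n => if d n = 0 then 0 else if d n = v then 1 else 2 with hσ
      have hψσ : ∀ n, ψ (σ n) = d n := by
        intro n
        simp only [hσ]
        rcases hd n with h | h | h
        · rw [if_pos h, h]; rfl
        · by_cases h0 : d n = 0
          · rw [if_pos h0, h0]; rfl
          · rw [if_neg h0, if_pos h, h]; rfl
        · by_cases h0 : d n = 0
          · rw [if_pos h0, h0]; rfl
          · by_cases h1 : d n = v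
            · rw [if_neg h0, if_pos h1, h1]; rfl
            · rw [if_neg h0, if_neg h1, h]; rfl
      refine ⟨σ, ?_⟩
      have h5 : (fun n => A⁻¹^(n+1) *ᵥ ψ (σ n)) = fun n => A⁻¹^(n+1) *ᵥ d n := by
        funext n; rw [hψσ]
      show Φ σ = x
      rw [hΦ]
      simp only [h5]
      exact hsum.tsum_eq
  rw [← hrange]
  exact isCompact_range hcont

end Tstruct

/-! ### Chains -/

def TDLink (A : TDmat) (T : Set TDvec) (n : ℕ) (x y : TDvec) : Prop :=
  ∃ t a b : TDvec, a ∈ T ∧ b ∈ T ∧ x = A⁻¹^n *ᵥ a + t ∧ y = A⁻¹^n *ᵥ b + t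

def TDChain (A : TDmat) (T : Set TDvec) (n : ℕ) (x y : TDvec) : Prop :=
  ∃ m : ℕ, ∃ z : ℕ → TDvec, z 0 = x ∧ z m = y ∧ (∀ i, i ≤ m → z i ∈ T) ∧
    ∀ i, i < m → TDLink A T n (z i) (z (i+1))

section chains
variable {A : TDmat} {v : TDvec} {T : Set TDvec}

lemma TD.link_symm {n : ℕ} {x y : TDvec} (h : TDLink A T n x y) : TDLink A T n y x := by
  obtain ⟨t, a, b, ha, hb, hx, hy⟩ := h
  exact ⟨t, b, a, hb, ha, hy, hx⟩

lemma TD.chain_single {n : ℕ} {x y : TDvec} (hx : x ∈ T) (hy : y ∈ T)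
    (hl : TDLink A T n x y) : TDChain A T n x y := by
  refine ⟨1, fun i => if i = 0 then x else y, by simp, by simp, ?_, ?_⟩
  · intro i _
    by_cases h0 : i = 0 <;> simp [h0, hx, hy]
  · intro i hi
    have h0 : i = 0 := by omega
    subst h0
    simpa using hl

lemma TD.chain_trans {n : ℕ} {x y w : TDvec} (h1 : TDChain A T n x y)
    (h2 : TDChain A T n y w) : TDChain A T n x w := by
  obtain ⟨m1, z1, hz10, hz1m, hz1T, hz1L⟩ := h1
  obtain ⟨m2, z2, hz20, hz2m, hz2T, hz2L⟩ := h2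
  refine ⟨m1 + m2, fun i => if i ≤ m1 then z1 i else z2 (i - m1), by simp [hz10], ?_, ?_, ?_⟩
  · show (if m1 + m2 ≤ m1 then z1 (m1 + m2) else z2 (m1 + m2 - m1)) = w
    by_cases h0 : m1 + m2 ≤ m1
    · have hm2 : m2 = 0 := by omega
      subst hm2
      rw [if_pos h0, Nat.add_zero, hz1m, ← hz20, hz2m]
    · rw [if_neg h0, show m1 + m2 - m1 = m2 from by omega, hz2m]
  · intro i hi
    by_cases h0 : i ≤ m1
    · show (if i ≤ m1 then z1 i else z2 (i - m1)) ∈ T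
      rw [if_pos h0]; exact hz1T i h0
    · show (if i ≤ m1 then z1 i else z2 (i - m1)) ∈ T
      rw [if_neg h0]; exact hz2T (i - m1) (by omega)
  · intro i hi
    show TDLink A T n (if i ≤ m1 then z1 i else z2 (i - m1))
      (if i + 1 ≤ m1 then z1 (i+1) else z2 (i + 1 - m1))
    by_cases h0 : i + 1 ≤ m1
    · rw [if_pos h0, if_pos (by omega : i ≤ m1)]
      exact hz1L i (by omega)
    · by_cases h1 : i ≤ m1
      · have him : i = m1 := by omega
        subst him
        rw [if_pos h1, if_neg h0, hz1m, show i + 1 - i = 1 from by omega, ← hz20]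
        exact hz2L 0 (by omega)
      · rw [if_neg h0, if_neg h1, show i + 1 - m1 = (i - m1) + 1 from by omega]
        exact hz2L (i - m1) (by omega)

lemma TD.chain_symm {n : ℕ} {x y : TDvec} (h : TDChain A T n x y) : TDChain A T n y x := by
  obtain ⟨m, z, hz0, hzm, hzT, hzL⟩ := h
  refine ⟨m, fun i => z (m - i), by simp [hzm], by simp [hz0], ?_, ?_⟩
  · intro i _
    exact hzT (m - i) (by omega)
  · intro i hi
    show TDLink A T n (z (m - i)) (z (m - (i+1)))
    have he : m - i = (m - (i+1)) + 1 := by omega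
    rw [he]
    exact TD.link_symm (hzL (m - (i+1)) (by omega))

lemma TD.chain_map {n : ℕ} {x y c : TDvec}
    (hfT : ∀ s, s ∈ T → A⁻¹ *ᵥ (c + s) ∈ T)
    (h : TDChain A T n x y) : TDChain A T (n+1) (A⁻¹ *ᵥ (c + x)) (A⁻¹ *ᵥ (c + y)) := by
  obtain ⟨m, z, hz0, hzm, hzT, hzL⟩ := h
  refine ⟨m, fun i => A⁻¹ *ᵥ (c + z i), by show A⁻¹ *ᵥ (c + z 0) = _; rw [hz0],
    by show A⁻¹ *ᵥ (c + z m) = _; rw [hzm], ?_, ?_⟩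
  · intro i hi
    exact hfT _ (hzT i hi)
  · intro i hi
    obtain ⟨t, a, b, ha, hb, hxi, hyi⟩ := hzL i hi
    refine ⟨A⁻¹ *ᵥ (c + t), a, b, ha, hb, ?_, ?_⟩
    · show A⁻¹ *ᵥ (c + z i) = _
      rw [hxi, mulVec_add, mulVec_add, mulVec_add, mulVec_mulVec, ← pow_succ']
      abel
    · show A⁻¹ *ᵥ (c + z (i+1)) = _
      rw [hyi, mulVec_add, mulVec_add, mulVec_add, mulVec_mulVec, ← pow_succ']
      abel

lemma TD.chain_all
    (hfT : ∀ c, c ∈ ({0, v, -(A *ᵥ v)} : Set TDvec) → ∀ s ∈ T, A⁻¹ *ᵥ (c + s) ∈ T)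
    (hdec : ∀ x ∈ T, ∃ c ∈ ({0, v, -(A *ᵥ v)} : Set TDvec), ∃ y ∈ T, x = A⁻¹ *ᵥ (c + y))
    {u1 u2 u3 u4 : TDvec} (hu1 : u1 ∈ T) (hu2 : u2 ∈ T) (hu3 : u3 ∈ T) (hu4 : u4 ∈ T)
    (hv12 : u1 - u2 = v) (hv34 : u3 - u4 = A *ᵥ v + v) :
    ∀ n, ∀ x ∈ T, ∀ y ∈ T, TDChain A T n x y := by
  intro n
  induction n with
  | zero =>
    intro x hx y hy
    apply TD.chain_single hx hy
    refine ⟨0, x, y, hx, hy, ?_, ?_⟩ <;>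
      rw [pow_zero, one_mulVec, add_zero]
  | succ n ih =>
    have hvD : v ∈ ({0, v, -(A *ᵥ v)} : Set TDvec) := Or.inr (Or.inl rfl)
    have hub : ∀ c, c ∈ ({0, v, -(A *ᵥ v)} : Set TDvec) → ∀ s, s ∈ T →
        TDChain A T (n+1) (A⁻¹ *ᵥ (c + s)) (A⁻¹ *ᵥ (v + u2)) := by
      intro c hc s hs
      rcases hc with h0 | h1 | h2
      · have hch := TD.chain_map (c := c) (fun t ht => hfT c (Or.inl h0) t ht) (ih s hs u1 hu1)
        have harg : c + u1 = v + u2 := by rw [h0, zero_add, ← hv12]; abel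
        rw [harg] at hch
        exact hch
      · have hch := TD.chain_map (c := c) (fun t ht => hfT c (Or.inr (Or.inl h1)) t ht)
          (ih s hs u2 hu2)
        rw [← h1]
        exact hch
      · have hch1 := TD.chain_map (c := c) (fun t ht => hfT c (Or.inr (Or.inr h2)) t ht)
          (ih s hs u3 hu3)
        have h3 : u3 = A *ᵥ v + v + u4 := by rw [← hv34]; abel
        have harg : c + u3 = v + u4 := by rw [h2, h3]; abel
        rw [harg] at hch1
        have hch2 := TD.chain_map (c := v) (fun t ht => hfT v hvD t ht) (ih u4 hu4 u2 hu2)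
        exact TD.chain_trans hch1 hch2
    intro x hx y hy
    obtain ⟨c, hc, x', hx', hxe⟩ := hdec x hx
    obtain ⟨c2, hc2, y', hy', hye⟩ := hdec y hy
    have h1 := hub c hc x' hx'
    have h2 := hub c2 hc2 y' hy'
    rw [← hxe] at h1
    rw [← hye] at h2
    exact TD.chain_trans h1 (TD.chain_symm h2)

end chains

/-! ### Connectedness from chains -/

open Metric in
lemma TD.conn_of_chains {A : TDmat} {T : Set TDvec} {R : ℝ}
    (hB6 : A⁻¹^6 = (-1/27:ℝ) • (1:TDmat))
    (hcomp : IsCompact T) (hzero : (0:TDvec) ∈ T)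
    (hbd : ∀ x ∈ T, ‖x‖ ≤ R)
    (hchain : ∀ n, ∀ x ∈ T, ∀ y ∈ T, TDChain A T n x y) : IsConnected T := by
  classical
  have hR0 : 0 ≤ R := le_trans (norm_nonneg _) (hbd 0 hzero)
  refine ⟨⟨0, hzero⟩, ?_⟩
  intro U V hU hV hsub hne1 hne2
  by_contra hcon
  rw [Set.not_nonempty_iff_eq_empty] at hcon
  obtain ⟨x, hxT, hxU⟩ := hne1
  obtain ⟨y, hyT, hyV⟩ := hne2
  set C1 := T ∩ U with hC1
  set C2 := T ∩ V with hC2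
  have hdisj : ∀ p, p ∈ C1 → p ∈ C2 → False := by
    intro p ⟨hpT, hpU⟩ ⟨_, hpV⟩
    have hmem : p ∈ T ∩ (U ∩ V) := ⟨hpT, hpU, hpV⟩
    rw [hcon] at hmem
    exact hmem
  have hC1eq : C1 = T ∩ Vᶜ := by
    ext p
    constructor
    · rintro ⟨hpT, hpU⟩
      refine ⟨hpT, fun hpV => hdisj p ⟨hpT, hpU⟩ ⟨hpT, hpV⟩⟩
    · rintro ⟨hpT, hpV⟩
      rcases hsub hpT with h | h
      · exact ⟨hpT, h⟩
      · exact absurd h hpV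
  have hC2eq : C2 = T ∩ Uᶜ := by
    ext p
    constructor
    · rintro ⟨hpT, hpV⟩
      refine ⟨hpT, fun hpU => hdisj p ⟨hpT, hpU⟩ ⟨hpT, hpV⟩⟩
    · rintro ⟨hpT, hpU⟩
      rcases hsub hpT with h | h
      · exact absurd h hpU
      · exact ⟨hpT, h⟩
  have hC1comp : IsCompact C1 := by rw [hC1eq]; exact hcomp.inter_right hV.isClosed_compl
  have hC2comp : IsCompact C2 := by rw [hC2eq]; exact hcomp.inter_right hU.isClosed_compl
  have hC1ne : C1.Nonempty := ⟨x, hxT, hxU⟩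
  have hC2ne : C2.Nonempty := ⟨y, hyT, hyV⟩
  obtain ⟨p0, hp0, hmin⟩ := hC1comp.exists_isMinOn hC1ne (continuous_infDist_pt C2).continuousOn
  set δ := infDist p0 C2 with hδ
  have hδpos : 0 < δ :=
    (hC2comp.isClosed.notMem_iff_infDist_pos hC2ne).mp (fun hmem => hdisj p0 hp0 hmem)
  have hdistlb : ∀ p ∈ C1, ∀ q ∈ C2, δ ≤ dist p q := by
    intro p hp q hq
    exact le_trans (hmin hp) (infDist_le_dist_of_mem hq)
  obtain ⟨k, hk⟩ := exists_pow_lt_of_lt_one (x := δ/(2*R+1))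
    (by positivity) (by norm_num : (1/27:ℝ) < 1)
  obtain ⟨m, z, hz0, hzm, hzT, hzL⟩ := hchain (6*k) x hxT y hyT
  have hex : ∃ i, i ≤ m ∧ z i ∈ C2 := ⟨m, le_refl m, by rw [hzm]; exact ⟨hyT, hyV⟩⟩
  set i0 := Nat.find hex with hi0
  obtain ⟨hi0m, hi0C2⟩ := Nat.find_spec hex
  have hi0pos : i0 ≠ 0 := by
    intro h0
    rw [hi0] at h0
    have h2 := hi0C2
    rw [h0, hz0] at h2
    exact hdisj x ⟨hxT, hxU⟩ h2
  have hprev_not : ¬ (i0 - 1 ≤ m ∧ z (i0-1) ∈ C2) := Nat.find_min hex (by omega)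
  have hprevT : z (i0-1) ∈ T := hzT _ (by omega)
  have hprevC1 : z (i0-1) ∈ C1 := by
    rcases hsub hprevT with h | h
    · exact ⟨hprevT, h⟩
    · exact absurd ⟨by omega, ⟨hprevT, h⟩⟩ hprev_not
  have hlink := hzL (i0-1) (by omega)
  rw [show i0 - 1 + 1 = i0 from by omega] at hlink
  obtain ⟨t, a, b, ha, hb, hxa, hyb⟩ := hlink
  have hdiff : z (i0-1) - z i0 = A⁻¹^(6*k) *ᵥ (a - b) := by
    rw [hxa, hyb, mulVec_sub]
    abel
  have hpowk : A⁻¹^(6*k) *ᵥ (a - b) = ((-1/27:ℝ)^k) • (a - b) := by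
    rw [pow_mul, hB6, smul_pow, one_pow, smul_mulVec, one_mulVec]
  have hnrm : dist (z (i0-1)) (z i0) ≤ (1/27:ℝ)^k * (2*R) := by
    rw [dist_eq_norm, hdiff, hpowk, norm_smul]
    have h1 : ‖(-1/27:ℝ)^k‖ = (1/27:ℝ)^k := by
      rw [norm_pow]
      norm_num
    rw [h1]
    have h2 : ‖a - b‖ ≤ 2*R := by
      calc ‖a - b‖ ≤ ‖a‖ + ‖b‖ := norm_sub_le a b
      _ ≤ R + R := add_le_add (hbd a ha) (hbd b hb)
      _ = 2*R := by ring
    have h3 : (0:ℝ) ≤ (1/27:ℝ)^k := by positivity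
    nlinarith
  have hlt : (1/27:ℝ)^k * (2*R) < δ := by
    have h4 : (1/27:ℝ)^k * (2*R+1) < δ := by
      rw [lt_div_iff₀ (by positivity)] at hk
      linarith
    nlinarith [pow_pos (by norm_num : (0:ℝ) < 1/27) k]
  have hfin := hdistlb _ hprevC1 _ hi0C2
  linarith

/-! ### Main theorem -/

theorem stmt14 (A : Matrix (Fin 2) (Fin 2) ℝ)
    (h : A * A + (3 : ℝ) • A + (3 : ℝ) • (1 : Matrix (Fin 2) (Fin 2) ℝ) = 0)
    (v : Fin 2 → ℝ) (hv : LinearIndependent ℝ ![v, A *ᵥ v])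
    (D : Set (Fin 2 → ℝ)) (hD : D = {0, v, -(A *ᵥ v)})
    (T : Set (Fin 2 → ℝ)) (hT : T = selfAffine A D) :
    HasSum (fun i : ℕ =>
        (if i + 1 = 1 then (-2 : ℝ) else if i + 1 = 2 then (-1 : ℝ)
          else (-1 : ℝ) ^ (i + 2)) • A⁻¹ ^ (i + 1))
      (1 : Matrix (Fin 2) (Fin 2) ℝ) ∧
    v ∈ T - T ∧ (A *ᵥ v + v) ∈ T - T ∧ IsConnected T := by
  subst hD
  subst hT
  obtain ⟨u1, hu1, u2, hu2, h12⟩ := TD.mem_sub_v (v := v) h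
  obtain ⟨u3, hu3, u4, hu4, h34⟩ := TD.mem_sub_av (v := v) h
  refine ⟨TD.conj1 h, ?_, ?_, ?_⟩
  · exact Set.mem_sub.mpr ⟨u1, hu1, u2, hu2, h12⟩
  · exact Set.mem_sub.mpr ⟨u3, hu3, u4, hu4, h34⟩
  · refine TD.conn_of_chains (TD.hB6 h) (TD.compact_T h) TD.zero_mem_T
      (fun x hx => TD.bound_T h hx) ?_
    exact TD.chain_all (fun c hc s hs => TD.piece_mem_T hc hs)
      (fun x hx => TD.decomp_T h hx) hu1 hu2 hu3 hu4 h12 h34
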